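/- arXiv:2410.14361 — 3 statements merged into one kernel-verified Lean document; each statement's English description precedes it below -/
import Mathlib

section
/- For every parameter θ ∈ ℝ^D, the Hessian matrix of the map δ ↦ KL(θ + δ, θ) at δ = 0 equals the Fisher information matrix J(θ). -/
/-- For every parameter `θ ∈ ℝ^D`, the Hessian matrix of the map `δ ↦ KL (θ + δ) θ`
at `δ = 0` equals the Fisher information matrix `J θ`. -/
theorem hessian_of_kl_eq_fisher_information {A : Type*} [Fintype A] [Nonempty A] {D : ℕ}
    (f : EuclideanSpace ℝ (Fin D) → A → ℝ)
    (hpos : ∀ θ a, 0 < f θ a)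
    (hsum : ∀ θ, ∑ a, f θ a = 1)
    (hdiff : ∀ a, ContDiff ℝ 2 (fun θ => f θ a))
    (KL : EuclideanSpace ℝ (Fin D) → EuclideanSpace ℝ (Fin D) → ℝ)
    (hKL : ∀ θ' θ, KL θ' θ = ∑ a, f θ' a * Real.log (f θ' a / f θ a))
    (θ : EuclideanSpace ℝ (Fin D))
    (J : Matrix (Fin D) (Fin D) ℝ)
    (hJ : ∀ i j, J i j = ∑ a, f θ a *
      fderiv ℝ (fun θ' => Real.log (f θ' a)) θ (EuclideanSpace.single i 1) *
      fderiv ℝ (fun θ' => Real.log (f θ' a)) θ (EuclideanSpace.single j 1)) :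
    Matrix.of (fun i j =>
      fderiv ℝ (fun δ => fderiv ℝ (fun δ' => KL (θ + δ') θ) δ (EuclideanSpace.single j 1))
        0 (EuclideanSpace.single i 1)) = J := by
  ext i j
  simp only [Matrix.of_apply]
  set g : A → EuclideanSpace ℝ (Fin D) → ℝ := fun a δ => f (θ + δ) a with hgdef
  have hgc : ∀ a, ContDiff ℝ 2 (g a) := fun a =>
    (hdiff a).comp (contDiff_const.add contDiff_id)
  have hg0 : ∀ a, g a 0 = f θ a := fun a => by simp [hgdef]
  have hgpos : ∀ a δ, 0 < g a δ := fun a δ => hpos _ a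
  have hgd : ∀ a δ, HasFDerivAt (g a) (fderiv ℝ (g a) δ) δ :=
    fun a δ => ((hgc a).differentiable two_ne_zero δ).hasFDerivAt
  have hKLfun : (fun δ' => KL (θ + δ') θ) =
      fun δ' => ∑ a, g a δ' * (Real.log (g a δ') - Real.log (f θ a)) := by
    funext δ'
    rw [hKL]
    exact Finset.sum_congr rfl fun a _ => by
      rw [Real.log_div (hgpos a δ').ne' (hpos θ a).ne']
  have step1 : ∀ δ, HasFDerivAt (fun δ' => KL (θ + δ') θ)
      (∑ a, (Real.log (g a δ) - Real.log (f θ a) + 1) • fderiv ℝ (g a) δ) δ := by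
    intro δ
    rw [hKLfun]
    apply HasFDerivAt.fun_sum
    intro a _
    have h1 := (hgd a δ).mul (((hgd a δ).log (hgpos a δ).ne').sub_const (Real.log (f θ a)))
    convert h1 using 1
    · rfl
    · rfl
    rw [smul_smul, mul_inv_cancel₀ (hgpos a δ).ne']
    module
  have hinner : ∀ δ, fderiv ℝ (fun δ' => KL (θ + δ') θ) δ (EuclideanSpace.single j 1)
      = ∑ a, (Real.log (g a δ) - Real.log (f θ a) + 1) *
          fderiv ℝ (g a) δ (EuclideanSpace.single j 1) := by
    intro δ
    rw [(step1 δ).fderiv]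
    simp [ContinuousLinearMap.sum_apply]
  set φ : A → EuclideanSpace ℝ (Fin D) → ℝ :=
    fun a δ => fderiv ℝ (g a) δ (EuclideanSpace.single j 1) with hφdef
  have hφc : ∀ a, ContDiff ℝ 1 (φ a) := by
    intro a
    have h1 : ContDiff ℝ 1 (fderiv ℝ (g a)) := (hgc a).fderiv_right (by norm_num)
    exact (ContinuousLinearMap.apply ℝ ℝ (EuclideanSpace.single j 1)).contDiff.comp h1
  have hφd : ∀ a δ, HasFDerivAt (φ a) (fderiv ℝ (φ a) δ) δ :=
    fun a δ => ((hφc a).differentiable one_ne_zero δ).hasFDerivAt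
  have hsumL : ∀ δ, ∑ a, fderiv ℝ (g a) δ =
      (0 : EuclideanSpace ℝ (Fin D) →L[ℝ] ℝ) := by
    intro δ
    have h2 : HasFDerivAt (fun δ => ∑ a, g a δ) (∑ a, fderiv ℝ (g a) δ) δ :=
      HasFDerivAt.fun_sum fun a _ => hgd a δ
    have h1 : (fun δ => ∑ a, g a δ) = fun _ => (1 : ℝ) :=
      funext fun δ => hsum (θ + δ)
    rw [h1] at h2
    exact h2.unique (hasFDerivAt_const 1 δ)
  have hφsum : ∀ δ, ∑ a, φ a δ = 0 := by
    intro δ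
    have h := congrArg (fun L : EuclideanSpace ℝ (Fin D) →L[ℝ] ℝ =>
      L (EuclideanSpace.single j 1)) (hsumL δ)
    simpa [ContinuousLinearMap.sum_apply] using h
  have hφfsum : ∑ a, fderiv ℝ (φ a) 0 (EuclideanSpace.single i 1) = 0 := by
    have h2 : HasFDerivAt (fun δ => ∑ a, φ a δ) (∑ a, fderiv ℝ (φ a) 0) 0 :=
      HasFDerivAt.fun_sum fun a _ => hφd a 0
    have h3 : (fun δ => ∑ a, φ a δ) = fun _ => (0 : ℝ) := funext hφsum
    rw [h3] at h2
    have h4 := h2.unique (hasFDerivAt_const 0 0)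
    have h := congrArg (fun L : EuclideanSpace ℝ (Fin D) →L[ℝ] ℝ =>
      L (EuclideanSpace.single i 1)) h4
    simpa [ContinuousLinearMap.sum_apply] using h
  have hΨ : HasFDerivAt
      (fun δ => ∑ a, (Real.log (g a δ) - Real.log (f θ a) + 1) * φ a δ)
      (∑ a, (fderiv ℝ (φ a) 0 + (φ a 0) • ((f θ a)⁻¹ • fderiv ℝ (g a) 0))) 0 := by
    apply HasFDerivAt.fun_sum
    intro a _
    have hu : HasFDerivAt (fun δ => Real.log (g a δ) - Real.log (f θ a) + 1)
        ((g a 0)⁻¹ • fderiv ℝ (g a) 0) 0 :=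
      (((hgd a 0).log (hgpos a 0).ne').sub_const _).add_const 1
    have h := hu.mul (hφd a 0)
    have hu0 : Real.log (g a 0) - Real.log (f θ a) + 1 = 1 := by rw [hg0]; ring
    convert h using 1
    · rfl
    · rfl
    rw [hu0, one_smul, hg0]
  have hL0 : ∀ a, fderiv ℝ (g a) 0 = fderiv ℝ (fun θ' => f θ' a) θ := by
    intro a
    have h1 : HasFDerivAt (fun δ : EuclideanSpace ℝ (Fin D) => θ + δ)
        (ContinuousLinearMap.id ℝ _) 0 := (hasFDerivAt_id (0 : EuclideanSpace ℝ (Fin D))).const_add θ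
    have h2 : HasFDerivAt (fun θ' => f θ' a) (fderiv ℝ (fun θ' => f θ' a) θ)
        ((fun δ : EuclideanSpace ℝ (Fin D) => θ + δ) 0) := by
      simpa using ((hdiff a).differentiable two_ne_zero θ).hasFDerivAt
    have h4 : HasFDerivAt (g a)
        ((fderiv ℝ (fun θ' => f θ' a) θ).comp (ContinuousLinearMap.id ℝ _)) 0 :=
      h2.comp (0 : EuclideanSpace ℝ (Fin D)) h1
    rw [h4.fderiv, ContinuousLinearMap.comp_id]
  have hlogf : ∀ a (v : EuclideanSpace ℝ (Fin D)),
      fderiv ℝ (fun θ' => Real.log (f θ' a)) θ v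
      = (f θ a)⁻¹ * fderiv ℝ (fun θ' => f θ' a) θ v := by
    intro a v
    have h := (((hdiff a).differentiable two_ne_zero θ).hasFDerivAt).log (hpos θ a).ne'
    rw [h.fderiv, ContinuousLinearMap.smul_apply, smul_eq_mul]
  have heq : (fun δ => fderiv ℝ (fun δ' => KL (θ + δ') θ) δ (EuclideanSpace.single j 1))
      = fun δ => ∑ a, (Real.log (g a δ) - Real.log (f θ a) + 1) * φ a δ :=
    funext hinner
  rw [heq, hΨ.fderiv]
  simp only [ContinuousLinearMap.sum_apply, ContinuousLinearMap.add_apply,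
    ContinuousLinearMap.smul_apply, smul_eq_mul]
  rw [Finset.sum_add_distrib, hφfsum, zero_add, hJ]
  apply Finset.sum_congr rfl
  intro a _
  have hφ0 : φ a 0 = fderiv ℝ (fun θ' => f θ' a) θ (EuclideanSpace.single j 1) := by
    simp only [hφdef]; rw [hL0]
  rw [hφ0, hL0, hlogf, hlogf]
  field_simp [(hpos θ a).ne']
end

section
/- For every parameter θ ∈ ℝ^D, the function δ ↦ KL(θ + δ, θ) − (1/2) δᵀ J(θ) δ is O(‖δ‖³) as δ → 0; that is, the Kullback–Leibler divergence admits the second-order Taylor expansion KL(θ + δ, θ) = (1/2) δᵀ J(θ) δ + O(‖δ‖³). -/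
open Filter Asymptotics Topology

set_option maxHeartbeats 1000000

theorem cube_aux {E F : Type*} [NormedAddCommGroup E] [NormedSpace ℝ E]
    [NormedAddCommGroup F] [NormedSpace ℝ F]
    {h : E → F} (hh : ContDiff ℝ 3 h) (h0 : h 0 = 0)
    (h1 : fderiv ℝ h 0 = 0) (h2 : fderiv ℝ (fderiv ℝ h) 0 = 0) :
    h =O[nhds 0] fun x => ‖x‖ ^ 3 := by
  have hD1 : ContDiff ℝ 2 (fderiv ℝ h) := hh.fderiv_right (by norm_num)
  have hD2 : ContDiff ℝ 1 (fderiv ℝ (fderiv ℝ h)) := hD1.fderiv_right (by norm_num)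
  have hO : (fderiv ℝ (fderiv ℝ h)) =O[𝓝 (0 : E)] fun x => x := by
    have := (hD2.differentiable (by norm_num) 0).isBigO_sub
    simpa [h2] using this
  rcases hO.exists_pos with ⟨C, hC, hbound⟩
  rw [isBigOWith_iff] at hbound
  rcases Metric.eventually_nhds_iff_ball.1 hbound with ⟨r, hr, hball⟩
  have key1 : ∀ x : E, ‖x‖ < r → ‖fderiv ℝ h x‖ ≤ C * ‖x‖ ^ 2 := by
    intro x hx
    have := (convex_closedBall (0:E) ‖x‖).norm_image_sub_le_of_norm_fderiv_le
      (f := fderiv ℝ h) (C := C * ‖x‖)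
      (fun y _ => (hD1.differentiable (by norm_num)).differentiableAt)
      (fun y hy => by
        have hy' : y ∈ Metric.ball (0 : E) r := by
          simp only [Metric.mem_closedBall, dist_zero_right] at hy
          simp only [Metric.mem_ball, dist_zero_right]
          exact lt_of_le_of_lt hy hx
        have := hball y hy'
        calc ‖fderiv ℝ (fderiv ℝ h) y‖ ≤ C * ‖y‖ := this
          _ ≤ C * ‖x‖ := by
              apply mul_le_mul_of_nonneg_left _ hC.le
              simpa [dist_zero_right] using hy
        )
      (Metric.mem_closedBall_self (norm_nonneg x))
      (show x ∈ Metric.closedBall (0:E) ‖x‖ by simp [Metric.mem_closedBall])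
    simpa [h1, sq, mul_assoc] using this
  have key2 : ∀ x : E, ‖x‖ < r → ‖h x‖ ≤ C * ‖x‖ ^ 3 := by
    intro x hx
    have := (convex_closedBall (0:E) ‖x‖).norm_image_sub_le_of_norm_fderiv_le
      (f := h) (C := C * ‖x‖ ^ 2)
      (fun y _ => (hh.differentiable (by norm_num)).differentiableAt)
      (fun y hy => by
        simp only [Metric.mem_closedBall, dist_zero_right] at hy
        calc ‖fderiv ℝ h y‖ ≤ C * ‖y‖ ^ 2 := key1 y (lt_of_le_of_lt hy hx)
          _ ≤ C * ‖x‖ ^ 2 := by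
              apply mul_le_mul_of_nonneg_left _ hC.le
              exact pow_le_pow_left₀ (norm_nonneg _) hy 2)
      (Metric.mem_closedBall_self (norm_nonneg x))
      (show x ∈ Metric.closedBall (0:E) ‖x‖ by simp [Metric.mem_closedBall])
    calc ‖h x‖ = ‖h x - h 0‖ := by simp [h0]
      _ ≤ C * ‖x‖ ^ 2 * ‖x - 0‖ := this
      _ = C * ‖x‖ ^ 3 := by rw [sub_zero]; ring
  rw [isBigO_iff]
  refine ⟨C, Metric.eventually_nhds_iff_ball.2 ⟨r, hr, fun x hx => ?_⟩⟩
  simp only [Metric.mem_ball, dist_zero_right] at hx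
  calc ‖h x‖ ≤ C * ‖x‖ ^ 3 := key2 x hx
    _ = C * ‖(‖x‖ ^ 3)‖ := by
        rw [Real.norm_of_nonneg (pow_nonneg (norm_nonneg _) 3)]

theorem bilin_aux {ι : Type*} [Fintype ι] (c : ℝ) (x u v : ι → ℝ) :
    ∑ i, ∑ j, c * x i * x j * (u i * v j + u j * v i)
      = 2 * (c * ((∑ i, u i * x i) * (∑ j, v j * x j))) := by
  have piece1 : ∑ i : ι, ∑ j : ι, c * x i * x j * (u i * v j)
      = c * ((∑ i, u i * x i) * (∑ j, v j * x j)) := by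
    rw [Fintype.sum_mul_sum, Finset.mul_sum]
    refine Finset.sum_congr rfl fun i _ => ?_
    rw [Finset.mul_sum]
    exact Finset.sum_congr rfl fun j _ => by ring
  have piece2 : ∑ i : ι, ∑ j : ι, c * x i * x j * (u j * v i)
      = c * ((∑ i, u i * x i) * (∑ j, v j * x j)) := by
    rw [Finset.sum_comm, Fintype.sum_mul_sum, Finset.mul_sum]
    refine Finset.sum_congr rfl fun i _ => ?_
    rw [Finset.mul_sum]
    exact Finset.sum_congr rfl fun j _ => by ring
  calc ∑ i, ∑ j, c * x i * x j * (u i * v j + u j * v i)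
      = ∑ i : ι, ∑ j : ι, (c * x i * x j * (u i * v j) + c * x i * x j * (u j * v i)) := by
        refine Finset.sum_congr rfl fun i _ => Finset.sum_congr rfl fun j _ => by ring
    _ = (∑ i : ι, ∑ j : ι, c * x i * x j * (u i * v j))
        + ∑ i : ι, ∑ j : ι, c * x i * x j * (u j * v i) := by
        rw [← Finset.sum_add_distrib]
        exact Finset.sum_congr rfl fun i _ => Finset.sum_add_distrib
    _ = 2 * (c * ((∑ i, u i * x i) * (∑ j, v j * x j))) := by rw [piece1, piece2]; ring

theorem euclidean_sum_single {D : ℕ} (u : EuclideanSpace ℝ (Fin D)) :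
    u = ∑ i, u i • EuclideanSpace.single i (1 : ℝ) := by
  have h := (EuclideanSpace.basisFun (Fin D) ℝ).sum_repr u
  simp only [EuclideanSpace.basisFun_apply, EuclideanSpace.basisFun_repr] at h
  exact h.symm

/-- For every parameter `θ ∈ ℝ^D`, the KL divergence admits the second-order Taylor
expansion `KL (θ + δ) θ = (1/2) δᵀ J(θ) δ + O(‖δ‖³)` as `δ → 0`. -/
theorem kl_second_order_taylor {A : Type*} [Fintype A] [Nonempty A] {D : ℕ}
    (f : EuclideanSpace ℝ (Fin D) → A → ℝ)
    (hpos : ∀ θ a, 0 < f θ a)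
    (hsum : ∀ θ, ∑ a, f θ a = 1)
    (hdiff : ∀ a, ContDiff ℝ 3 (fun θ => f θ a))
    (KL : EuclideanSpace ℝ (Fin D) → EuclideanSpace ℝ (Fin D) → ℝ)
    (hKL : ∀ θ' θ, KL θ' θ = ∑ a, f θ' a * Real.log (f θ' a / f θ a))
    (θ : EuclideanSpace ℝ (Fin D))
    (J : Matrix (Fin D) (Fin D) ℝ)
    (hJ : ∀ i j, J i j = ∑ a, f θ a *
      fderiv ℝ (fun θ' => Real.log (f θ' a)) θ (EuclideanSpace.single i 1) *
      fderiv ℝ (fun θ' => Real.log (f θ' a)) θ (EuclideanSpace.single j 1)) :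
    (fun δ : EuclideanSpace ℝ (Fin D) =>
        KL (θ + δ) θ - (1 / 2) * ∑ i, ∑ j, δ i * J i j * δ j)
      =O[nhds 0] (fun δ => ‖δ‖ ^ 3) := by
  classical
  have hne : ∀ θ' a, f θ' a ≠ 0 := fun θ' a => (hpos θ' a).ne'
  have hfE : ∀ a, ContDiff ℝ 3 (fun δ : EuclideanSpace ℝ (Fin D) => f (θ + δ) a) :=
    fun a => (hdiff a).comp (contDiff_const.add contDiff_id)
  set P : A → EuclideanSpace ℝ (Fin D) → (EuclideanSpace ℝ (Fin D) →L[ℝ] ℝ) :=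
    fun a δ => fderiv ℝ (fun δ' => f (θ + δ') a) δ with hPdef
  have hP : ∀ a δ, HasFDerivAt (fun δ' => f (θ + δ') a) (P a δ) δ :=
    fun a δ => (((hfE a).differentiable (by norm_num)) δ).hasFDerivAt
  set L : A → (EuclideanSpace ℝ (Fin D) →L[ℝ] ℝ) :=
    fun a => fderiv ℝ (fun θ' => f θ' a) θ with hLdef
  have hfθ : ∀ a, HasFDerivAt (fun θ' => f θ' a) (L a) θ :=
    fun a => (((hdiff a).differentiable (by norm_num)) θ).hasFDerivAt
  have hP0 : ∀ a, P a 0 = L a := by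
    intro a
    have h1 : HasFDerivAt (fun θ' => f θ' a) (L a) (θ + 0) := by
      rw [add_zero]; exact hfθ a
    have h2 : HasFDerivAt (fun δ' : EuclideanSpace ℝ (Fin D) => θ + δ')
        (ContinuousLinearMap.id ℝ (EuclideanSpace ℝ (Fin D))) 0 :=
      (hasFDerivAt_id (0 : EuclideanSpace ℝ (Fin D))).const_add θ
    have h3 := h1.comp (0 : EuclideanSpace ℝ (Fin D)) h2
    rw [ContinuousLinearMap.comp_id] at h3
    exact (hP a 0).unique h3
  have hPsum : ∀ δ, ∑ a, P a δ = 0 := by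
    intro δ
    have h1 : HasFDerivAt (fun δ' : EuclideanSpace ℝ (Fin D) => ∑ a, f (θ + δ') a)
        (∑ a, P a δ) δ := HasFDerivAt.fun_sum fun a _ => hP a δ
    have h2 : (fun δ' : EuclideanSpace ℝ (Fin D) => ∑ a, f (θ + δ') a) = fun _ => (1 : ℝ) :=
      funext fun δ' => hsum _
    rw [h2] at h1
    exact h1.unique (hasFDerivAt_const 1 δ)
  have hlog : ∀ a δ, HasFDerivAt (fun δ' => Real.log (f (θ + δ') a))
      ((f (θ + δ) a)⁻¹ • P a δ) δ := fun a δ => (hP a δ).log (hne _ a)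
  set g : EuclideanSpace ℝ (Fin D) → ℝ :=
    fun δ => ∑ a, f (θ + δ) a * (Real.log (f (θ + δ) a) - Real.log (f θ a)) with hgdef
  set G : EuclideanSpace ℝ (Fin D) → (EuclideanSpace ℝ (Fin D) →L[ℝ] ℝ) := fun δ =>
    ∑ a, (Real.log (f (θ + δ) a) - Real.log (f θ a) + 1) • P a δ with hGdef
  have hG : ∀ δ, HasFDerivAt g (G δ) δ := by
    intro δ
    apply HasFDerivAt.fun_sum
    intro a _
    have hmul := (hP a δ).mul ((hlog a δ).sub_const (Real.log (f θ a)))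
    have e : (Real.log (f (θ + δ) a) - Real.log (f θ a) + 1) • P a δ
        = f (θ + δ) a • (f (θ + δ) a)⁻¹ • P a δ
          + (Real.log (f (θ + δ) a) - Real.log (f θ a)) • P a δ := by
      rw [smul_smul, mul_inv_cancel₀ (hne _ a), add_smul, one_smul, add_comm]
    rw [e]
    exact hmul
  set Q : EuclideanSpace ℝ (Fin D) →L[ℝ] (EuclideanSpace ℝ (Fin D) →L[ℝ] ℝ) :=
    (1/2 : ℝ) • ∑ i, ∑ j, J i j •
      ((EuclideanSpace.proj i).smulRight (EuclideanSpace.proj j)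
        + (EuclideanSpace.proj j).smulRight (EuclideanSpace.proj i)) with hQdef
  set q : EuclideanSpace ℝ (Fin D) → ℝ :=
    fun δ => (1/2 : ℝ) * ∑ i, ∑ j, δ i * J i j * δ j with hqdef
  have hq : ∀ δ, HasFDerivAt q (Q δ) δ := by
    intro δ
    have hterm : ∀ i j : Fin D, HasFDerivAt
        (fun δ' : EuclideanSpace ℝ (Fin D) => δ' i * J i j * δ' j)
        ((δ i * J i j) • (EuclideanSpace.proj j : EuclideanSpace ℝ (Fin D) →L[ℝ] ℝ)
          + (δ j * J i j) • (EuclideanSpace.proj i : EuclideanSpace ℝ (Fin D) →L[ℝ] ℝ)) δ := by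
      intro i j
      have h1 : HasFDerivAt (fun δ' : EuclideanSpace ℝ (Fin D) => δ' i * J i j)
          (J i j • (EuclideanSpace.proj i : EuclideanSpace ℝ (Fin D) →L[ℝ] ℝ)) δ :=
        (EuclideanSpace.proj i : EuclideanSpace ℝ (Fin D) →L[ℝ] ℝ).hasFDerivAt.mul_const
          (J i j)
      have h2 : HasFDerivAt (fun δ' : EuclideanSpace ℝ (Fin D) => δ' j)
          ((EuclideanSpace.proj j : EuclideanSpace ℝ (Fin D) →L[ℝ] ℝ)) δ :=
        (EuclideanSpace.proj j : EuclideanSpace ℝ (Fin D) →L[ℝ] ℝ).hasFDerivAt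
      have e : (δ i * J i j) • (EuclideanSpace.proj j : EuclideanSpace ℝ (Fin D) →L[ℝ] ℝ)
            + (δ j * J i j) • (EuclideanSpace.proj i : EuclideanSpace ℝ (Fin D) →L[ℝ] ℝ)
          = (δ i * J i j) • (EuclideanSpace.proj j : EuclideanSpace ℝ (Fin D) →L[ℝ] ℝ)
            + δ j • (J i j • (EuclideanSpace.proj i : EuclideanSpace ℝ (Fin D) →L[ℝ] ℝ)) := by
        rw [smul_smul]
      rw [e]
      exact h1.mul h2
    have hsum' : HasFDerivAt
        (fun δ' : EuclideanSpace ℝ (Fin D) => ∑ i, ∑ j, δ' i * J i j * δ' j)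
        (∑ i, ∑ j, ((δ i * J i j) • (EuclideanSpace.proj j : EuclideanSpace ℝ (Fin D) →L[ℝ] ℝ)
          + (δ j * J i j) • (EuclideanSpace.proj i : EuclideanSpace ℝ (Fin D) →L[ℝ] ℝ))) δ :=
      HasFDerivAt.fun_sum fun i _ => HasFDerivAt.fun_sum fun j _ => hterm i j
    have hQδ : Q δ = (1/2 : ℝ) •
        (∑ i, ∑ j, ((δ i * J i j) • (EuclideanSpace.proj j : EuclideanSpace ℝ (Fin D) →L[ℝ] ℝ)
          + (δ j * J i j) • (EuclideanSpace.proj i : EuclideanSpace ℝ (Fin D) →L[ℝ] ℝ))) := by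
      rw [hQdef]
      ext v
      simp only [ContinuousLinearMap.smul_apply, ContinuousLinearMap.coe_sum',
        Finset.sum_apply, ContinuousLinearMap.add_apply,
        ContinuousLinearMap.smulRight_apply, smul_eq_mul, Finset.mul_sum,
        PiLp.proj_apply]
      refine Finset.sum_congr rfl fun i _ => Finset.sum_congr rfl fun j _ => ?_
      ring
    rw [hQδ]
    exact hsum'.const_mul (1/2 : ℝ)
  have hfun : (fun δ : EuclideanSpace ℝ (Fin D) =>
        KL (θ + δ) θ - (1 / 2) * ∑ i, ∑ j, δ i * J i j * δ j)
      = fun δ => g δ - q δ := by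
    funext δ
    rw [hgdef, hqdef, hKL]
    simp only [Real.log_div (hne _ _) (hne _ _)]
  rw [hfun]
  have hh3 : ContDiff ℝ 3 (fun δ : EuclideanSpace ℝ (Fin D) => g δ - q δ) := by
    apply ContDiff.sub
    · apply ContDiff.sum
      intro a _
      exact (hfE a).mul (((hfE a).log (fun δ => hne _ a)).sub contDiff_const)
    · refine contDiff_const.mul (ContDiff.sum fun i _ => ContDiff.sum fun j _ => ?_)
      exact (((EuclideanSpace.proj i : EuclideanSpace ℝ (Fin D) →L[ℝ] ℝ).contDiff).mul
        contDiff_const).mul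
        ((EuclideanSpace.proj j : EuclideanSpace ℝ (Fin D) →L[ℝ] ℝ).contDiff)
  have hG0 : G 0 = 0 := by
    rw [hGdef]
    simp only [add_zero, sub_self, zero_add, one_smul]
    exact hPsum 0
  have hg0 : g 0 = 0 := by
    rw [hgdef]
    simp only [add_zero, sub_self, mul_zero, Finset.sum_const_zero]
  have hq0 : q 0 = 0 := by
    rw [hqdef]
    simp only [PiLp.zero_apply, zero_mul, mul_zero, Finset.sum_const_zero]
  have hval0 : g 0 - q 0 = 0 := by rw [hg0, hq0, sub_zero]
  have hd1 : fderiv ℝ (fun δ : EuclideanSpace ℝ (Fin D) => g δ - q δ) 0 = 0 := by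
    have := ((hG 0).fun_sub (hq 0)).fderiv
    rw [this, hG0, map_zero, sub_zero]
  have hd2 : fderiv ℝ (fderiv ℝ (fun δ : EuclideanSpace ℝ (Fin D) => g δ - q δ)) 0 = 0 := by
    have hDh : fderiv ℝ (fun δ : EuclideanSpace ℝ (Fin D) => g δ - q δ)
        = fun δ => G δ - Q δ := funext fun δ => ((hG δ).sub (hq δ)).fderiv
    rw [hDh]
    have hPc : ∀ a, ContDiff ℝ 2 (P a) := fun a => (hfE a).fderiv_right (by norm_num)
    have hdP : ∀ a, HasFDerivAt (P a) (fderiv ℝ (P a) 0) 0 :=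
      fun a => (((hPc a).differentiable (by norm_num)) 0).hasFDerivAt
    have hsumT : ∑ a, fderiv ℝ (P a) 0 = 0 := by
      have h1 : HasFDerivAt (fun δ => ∑ a, P a δ) (∑ a, fderiv ℝ (P a) 0) 0 :=
        HasFDerivAt.fun_sum fun a _ => hdP a
      have h2 : (fun δ => ∑ a, P a δ)
          = fun _ => (0 : EuclideanSpace ℝ (Fin D) →L[ℝ] ℝ) := funext hPsum
      rw [h2] at h1
      exact h1.unique (hasFDerivAt_const _ _)
    have hG' : HasFDerivAt G
        (∑ a, (fderiv ℝ (P a) 0 + ((f θ a)⁻¹ • L a).smulRight (L a))) 0 := by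
      rw [hGdef]
      apply HasFDerivAt.fun_sum
      intro a _
      have hc : HasFDerivAt
          (fun δ : EuclideanSpace ℝ (Fin D) =>
            Real.log (f (θ + δ) a) - Real.log (f θ a) + 1)
          ((f (θ + 0) a)⁻¹ • P a 0) 0 := ((hlog a 0).sub_const _).add_const 1
      have hsm := hc.smul (hdP a)
      have e : fderiv ℝ (P a) 0 + ((f θ a)⁻¹ • L a).smulRight (L a)
          = (Real.log (f (θ + 0) a) - Real.log (f θ a) + 1) • fderiv ℝ (P a) 0
            + ((f (θ + 0) a)⁻¹ • P a 0).smulRight (P a 0) := by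
        rw [hP0 a, add_zero, sub_self, zero_add, one_smul]
      rw [e]
      exact hsm
    have hsub := hG'.fun_sub Q.hasFDerivAt
    rw [hsub.fderiv, Finset.sum_add_distrib, hsumT, zero_add, sub_eq_zero]
    -- final algebraic identity
    have hlogθ : ∀ a, fderiv ℝ (fun θ' => Real.log (f θ' a)) θ = (f θ a)⁻¹ • L a :=
      fun a => ((hfθ a).log (hne θ a)).fderiv
    have hJ' : ∀ i j, J i j = ∑ a, (f θ a)⁻¹ * (L a (EuclideanSpace.single i 1))
        * (L a (EuclideanSpace.single j 1)) := by
      intro i j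
      rw [hJ i j]
      refine Finset.sum_congr rfl fun a _ => ?_
      rw [hlogθ a]
      simp only [ContinuousLinearMap.smul_apply, smul_eq_mul]
      have := hne θ a
      field_simp
    have hLu : ∀ (a : A) (u : EuclideanSpace ℝ (Fin D)),
        L a u = ∑ i, u i * L a (EuclideanSpace.single i 1) := by
      intro a u
      conv_lhs => rw [euclidean_sum_single u]
      rw [map_sum]
      simp only [map_smul, smul_eq_mul]
    ext u v
    simp only [ContinuousLinearMap.coe_sum', Finset.sum_apply,
      ContinuousLinearMap.smulRight_apply, ContinuousLinearMap.smul_apply,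
      ContinuousLinearMap.add_apply, smul_eq_mul, PiLp.proj_apply]
    -- LHS : ∑ a, (f θ a)⁻¹ * L a u * (L a v)
    -- RHS : 1/2 * ∑ i, ∑ j, J i j * (u i * v j + u j * v i)
    have hswap : ∑ i, ∑ j, (∑ a, (f θ a)⁻¹ * (L a (EuclideanSpace.single i 1))
          * (L a (EuclideanSpace.single j 1))) * (u i * v j + u j * v i)
        = ∑ a, ∑ i, ∑ j, (f θ a)⁻¹ * (L a (EuclideanSpace.single i 1))
          * (L a (EuclideanSpace.single j 1)) * (u i * v j + u j * v i) := by
      calc ∑ i, ∑ j, (∑ a, (f θ a)⁻¹ * (L a (EuclideanSpace.single i 1))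
            * (L a (EuclideanSpace.single j 1))) * (u i * v j + u j * v i)
          = ∑ i, ∑ j, ∑ a, (f θ a)⁻¹ * (L a (EuclideanSpace.single i 1))
            * (L a (EuclideanSpace.single j 1)) * (u i * v j + u j * v i) :=
            Finset.sum_congr rfl fun i _ => Finset.sum_congr rfl fun j _ =>
              Finset.sum_mul _ _ _
        _ = ∑ i, ∑ a, ∑ j, (f θ a)⁻¹ * (L a (EuclideanSpace.single i 1))
            * (L a (EuclideanSpace.single j 1)) * (u i * v j + u j * v i) :=
            Finset.sum_congr rfl fun i _ => Finset.sum_comm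
        _ = ∑ a, ∑ i, ∑ j, (f θ a)⁻¹ * (L a (EuclideanSpace.single i 1))
            * (L a (EuclideanSpace.single j 1)) * (u i * v j + u j * v i) :=
            Finset.sum_comm
    calc ∑ a, (f θ a)⁻¹ * L a u * L a v
        = ∑ a, (1/2 : ℝ) * (2 * ((f θ a)⁻¹ * ((∑ i, u i * L a (EuclideanSpace.single i 1))
            * (∑ j, v j * L a (EuclideanSpace.single j 1))))) := by
          refine Finset.sum_congr rfl fun a _ => ?_
          rw [hLu a u, hLu a v]; ring
      _ = (1/2 : ℝ) * ∑ a, ∑ i, ∑ j, (f θ a)⁻¹ * (L a (EuclideanSpace.single i 1))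
            * (L a (EuclideanSpace.single j 1)) * (u i * v j + u j * v i) := by
          rw [Finset.mul_sum]
          refine Finset.sum_congr rfl fun a _ => ?_
          rw [bilin_aux]
      _ = (1/2 : ℝ) * ∑ i, ∑ j, J i j * (u i * v j + u j * v i) := by
          rw [← hswap]
          congr 1
          refine Finset.sum_congr rfl fun i _ => Finset.sum_congr rfl fun j _ => ?_
          rw [hJ']
      _ = (Q u) v := by
          rw [hQdef]
          simp only [ContinuousLinearMap.smul_apply, ContinuousLinearMap.coe_sum',
            Finset.sum_apply, ContinuousLinearMap.add_apply,
            ContinuousLinearMap.smulRight_apply, smul_eq_mul, PiLp.proj_apply,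
            Finset.mul_sum]
  exact cube_aux hh3 hval0 hd1 hd2
end

section
/- For every parameter θ ∈ ℝ^D, there exist ε > 0 and M ≥ 0 such that for every probability space (Ω, 𝓕, P) and every measurable random vector δ : Ω → ℝ^D with ‖δ‖ ≤ ε almost surely, the expected Kullback–Leibler divergence satisfies |E[KL(θ + δ, θ)] − (1/2) E[δᵀ J(θ) δ]| ≤ M · E[‖δ‖³]. -/
open MeasureTheory Metric

lemma cube_bound {E : Type*} [NormedAddCommGroup E] [NormedSpace ℝ E] [ProperSpace E]
    {g : E → ℝ} {G : E → E →L[ℝ] ℝ} {θ : E}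
    (hg : ∀ ψ, HasFDerivAt g (G ψ) ψ)
    (hGdiff : ContDiff ℝ 2 G)
    (hg0 : g θ = 0) (hG0 : G θ = 0) (hK0 : fderiv ℝ G θ = 0) :
    ∃ C ≥ (0:ℝ), ∀ v : E, ‖v‖ ≤ 1 → |g (θ + v)| ≤ C * ‖v‖ ^ 3 := by
  set K := fderiv ℝ G with hKdef
  have hKdiff : ContDiff ℝ 1 K := hGdiff.fderiv_right (by norm_num)
  have hKf : ∀ x, HasFDerivAt K (fderiv ℝ K x) x :=
    fun x => (hKdiff.differentiable (by norm_num) x).hasFDerivAt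
  have hGf : ∀ x, HasFDerivAt G (K x) x :=
    fun x => (hGdiff.differentiable (by norm_num) x).hasFDerivAt
  letI : NormedAddCommGroup (E →L[ℝ] E →L[ℝ] ℝ) := inferInstance
  letI : NormedSpace ℝ (E →L[ℝ] E →L[ℝ] ℝ) := inferInstance
  have hcont : Continuous (fderiv ℝ K) := hKdiff.continuous_fderiv (by norm_num)
  obtain ⟨C₀, hC₀⟩ := (isCompact_closedBall θ 1).exists_bound_of_continuousOn hcont.continuousOn
  refine ⟨max C₀ 0, le_max_right _ _, ?_⟩
  set C := max C₀ 0 with hCdef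
  have hCnn : (0:ℝ) ≤ C := le_max_right _ _
  intro v hv
  have hθmem : θ ∈ closedBall θ 1 := mem_closedBall_self zero_le_one
  have hKb : ∀ x ∈ closedBall θ 1, ‖K x‖ ≤ C * ‖x - θ‖ := by
    intro x hx
    have := (convex_closedBall θ 1).norm_image_sub_le_of_norm_hasFDerivWithin_le
      (f := K) (f' := fderiv ℝ K) (C := C)
      (fun y hy => (hKf y).hasFDerivWithinAt)
      (fun y hy => (hC₀ y hy).trans (le_max_left _ _)) hθmem hx
    simpa [hK0] using this
  have hsub : closedBall θ ‖v‖ ⊆ closedBall θ 1 := closedBall_subset_closedBall hv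
  have hθmem' : θ ∈ closedBall θ ‖v‖ := mem_closedBall_self (norm_nonneg v)
  have hGb : ∀ x ∈ closedBall θ ‖v‖, ‖G x‖ ≤ (C * ‖v‖) * ‖v‖ := by
    intro x hx
    have h1 := (convex_closedBall θ ‖v‖).norm_image_sub_le_of_norm_hasFDerivWithin_le
      (f := G) (f' := K)
      (fun y hy => (hGf y).hasFDerivWithinAt)
      (fun y hy => by
        have := hKb y (hsub hy)
        exact this.trans (mul_le_mul_of_nonneg_left (by simpa [dist_eq_norm] using hy) hCnn))
      hθmem' hx
    have h2 : ‖x - θ‖ ≤ ‖v‖ := by simpa [dist_eq_norm] using hx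
    calc ‖G x‖ = ‖G x - G θ‖ := by simp [hG0]
      _ ≤ C * ‖v‖ * ‖x - θ‖ := h1
      _ ≤ C * ‖v‖ * ‖v‖ := mul_le_mul_of_nonneg_left h2 (mul_nonneg hCnn (norm_nonneg v))
  have hvmem : θ + v ∈ closedBall θ ‖v‖ := by simp [dist_eq_norm]
  have := (convex_closedBall θ ‖v‖).norm_image_sub_le_of_norm_hasFDerivWithin_le
    (f := g) (f' := G)
    (fun y hy => (hg y).hasFDerivWithinAt) hGb hθmem' hvmem
  have h3 : |g (θ + v)| ≤ C * ‖v‖ * ‖v‖ * ‖v‖ := by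
    simpa [hg0, Real.norm_eq_abs] using this
  calc |g (θ + v)| ≤ C * ‖v‖ * ‖v‖ * ‖v‖ := h3
    _ = C * ‖v‖ ^ 3 := by ring

set_option maxHeartbeats 2000000 in
/-- For every parameter `θ ∈ ℝ^D`, there exist `ε > 0` and `M ≥ 0` such that for every
probability space and every random vector `δ` with `‖δ‖ ≤ ε` almost surely,
`|E[KL (θ + δ) θ] − (1/2) E[δᵀ J(θ) δ]| ≤ M · E[‖δ‖³]`. -/
theorem expected_kl_close_to_fisher_quadratic {A : Type*} [Fintype A] [Nonempty A] {D : ℕ}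
    (f : EuclideanSpace ℝ (Fin D) → A → ℝ)
    (hpos : ∀ θ a, 0 < f θ a)
    (hsum : ∀ θ, ∑ a, f θ a = 1)
    (hdiff : ∀ a, ContDiff ℝ 3 (fun θ => f θ a))
    (KL : EuclideanSpace ℝ (Fin D) → EuclideanSpace ℝ (Fin D) → ℝ)
    (hKL : ∀ θ' θ, KL θ' θ = ∑ a, f θ' a * Real.log (f θ' a / f θ a))
    (θ : EuclideanSpace ℝ (Fin D))
    (J : Matrix (Fin D) (Fin D) ℝ)
    (hJ : ∀ i j, J i j = ∑ a, f θ a *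
      fderiv ℝ (fun θ' => Real.log (f θ' a)) θ (EuclideanSpace.single i 1) *
      fderiv ℝ (fun θ' => Real.log (f θ' a)) θ (EuclideanSpace.single j 1)) :
    ∃ ε > (0 : ℝ), ∃ M ≥ (0 : ℝ),
      ∀ (Ω : Type) [MeasurableSpace Ω] (μ : Measure Ω) [IsProbabilityMeasure μ]
        (δ : Ω → EuclideanSpace ℝ (Fin D)), Measurable δ →
        (∀ᵐ ω ∂μ, ‖δ ω‖ ≤ ε) →
        |(∫ ω, KL (θ + δ ω) θ ∂μ)
            - (1 / 2) * ∫ ω, ∑ i, ∑ j, δ ω i * J i j * δ ω j ∂μ|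
          ≤ M * ∫ ω, ‖δ ω‖ ^ 3 ∂μ := by
  classical
  set L : A → (EuclideanSpace ℝ (Fin D) →L[ℝ] ℝ) := fun a => fderiv ℝ (fun ψ => f ψ a) θ with hLdef
  set g : EuclideanSpace ℝ (Fin D) → ℝ := fun ψ =>
    ∑ a, (f ψ a * (Real.log (f ψ a) - Real.log (f θ a)) - (L a (ψ - θ))^2 / (2 * f θ a))
    with hgdef
  set G : EuclideanSpace ℝ (Fin D) → (EuclideanSpace ℝ (Fin D) →L[ℝ] ℝ) := fun ψ =>
    ∑ a, ((Real.log (f ψ a) - Real.log (f θ a) + 1) • (fderiv ℝ (fun ψ' => f ψ' a) ψ)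
          - (L a (ψ - θ) / f θ a) • L a) with hGdef
  have hDF : ∀ (a : A) (ψ : EuclideanSpace ℝ (Fin D)),
      HasFDerivAt (fun ψ' => f ψ' a) (fderiv ℝ (fun ψ' => f ψ' a) ψ) ψ :=
    fun a ψ => ((hdiff a).differentiable (by norm_num) ψ).hasFDerivAt
  have hlog : ∀ (a : A) (ψ : EuclideanSpace ℝ (Fin D)),
      HasFDerivAt (fun ψ' => Real.log (f ψ' a))
        ((f ψ a)⁻¹ • fderiv ℝ (fun ψ' => f ψ' a) ψ) ψ :=
    fun a ψ => (hDF a ψ).log (hpos ψ a).ne'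
  have hlin : ∀ (a : A) (ψ : EuclideanSpace ℝ (Fin D)),
      HasFDerivAt (fun ψ' => L a (ψ' - θ)) (L a) ψ := by
    intro a ψ
    have h := ((L a).hasFDerivAt (x := ψ)).sub_const (L a θ)
    exact h.congr_of_eventuallyEq (Filter.Eventually.of_forall fun ψ' => map_sub _ _ _)
  have hDFC : ∀ a : A, ContDiff ℝ 2 (fderiv ℝ (fun ψ' => f ψ' a)) :=
    fun a => (hdiff a).fderiv_right (m := 2) (by norm_num)
  -- g has derivative G
  have hGg : ∀ ψ, HasFDerivAt g (G ψ) ψ := by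
    intro ψ
    have hterm : ∀ a : A, HasFDerivAt
        (fun ψ' => f ψ' a * (Real.log (f ψ' a) - Real.log (f θ a)) - (L a (ψ' - θ))^2 / (2 * f θ a))
        ((Real.log (f ψ a) - Real.log (f θ a) + 1) • (fderiv ℝ (fun ψ' => f ψ' a) ψ)
          - (L a (ψ - θ) / f θ a) • L a) ψ := by
      intro a
      have h1 := (hDF a ψ).fun_mul ((hlog a ψ).sub_const (Real.log (f θ a)))
      have h2 := ((hlin a ψ).fun_mul (hlin a ψ)).const_mul ((2 * f θ a)⁻¹)
      have h3 := h1.fun_sub h2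
      have heq : (fun ψ' => f ψ' a * (Real.log (f ψ' a) - Real.log (f θ a)) - (L a (ψ' - θ))^2 / (2 * f θ a))
          = (fun ψ' => f ψ' a * (Real.log (f ψ' a) - Real.log (f θ a)) - (2 * f θ a)⁻¹ * ((L a (ψ' - θ)) * (L a (ψ' - θ)))) := by
        funext ψ'; ring
      rw [heq]
      refine h3.congr_fderiv ?_
      ext u
      have hf : f ψ a ≠ 0 := (hpos ψ a).ne'
      have hfθ : f θ a ≠ 0 := (hpos θ a).ne'
      simp only [ContinuousLinearMap.add_apply, ContinuousLinearMap.sub_apply,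
        ContinuousLinearMap.smul_apply, ContinuousLinearMap.coe_smul', Pi.smul_apply,
        smul_eq_mul]
      field_simp
      ring
    exact HasFDerivAt.fun_sum (fun a _ => hterm a)
  -- sum of first derivatives vanishes
  have hz : ∀ ψ, ∑ a, fderiv ℝ (fun ψ' => f ψ' a) ψ = 0 := by
    intro ψ
    have ha : HasFDerivAt (fun ψ' => ∑ a, f ψ' a) (∑ a, fderiv ℝ (fun ψ' => f ψ' a) ψ) ψ :=
      HasFDerivAt.fun_sum (fun a _ => hDF a ψ)
    have hb : HasFDerivAt (fun _ : EuclideanSpace ℝ (Fin D) => (1:ℝ))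
      (0 : EuclideanSpace ℝ (Fin D) →L[ℝ] ℝ) ψ := hasFDerivAt_const (1:ℝ) ψ
    have h3 : (fun ψ' => ∑ a, f ψ' a) = (fun _ => (1:ℝ)) := funext hsum
    rw [h3] at ha
    exact ha.unique hb
  have hGθ : G θ = 0 := by
    have h : G θ = ∑ a, fderiv ℝ (fun ψ' => f ψ' a) θ := by
      rw [hGdef]
      refine Finset.sum_congr rfl (fun a _ => ?_)
      simp [hLdef]
    rw [h, hz]
  have hgθ : g θ = 0 := by
    rw [hgdef]
    refine Finset.sum_eq_zero (fun a _ => ?_)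
    simp
  have hGC2 : ContDiff ℝ 2 G := by
    rw [hGdef]
    apply ContDiff.sum
    intro a _
    apply ContDiff.sub
    · apply ContDiff.fun_smul
      · have hlogC : ContDiff ℝ 3 (fun ψ => Real.log (f ψ a)) :=
          (hdiff a).log (fun x => (hpos x a).ne')
        exact (((hlogC.sub contDiff_const).add contDiff_const).of_le (by norm_num))
      · exact hDFC a
    · apply ContDiff.fun_smul _ contDiff_const
      exact ((L a).contDiff.comp (contDiff_id.sub contDiff_const)).div_const _
  have hz2 : ∑ a, fderiv ℝ (fderiv ℝ (fun ψ' => f ψ' a)) θ = 0 := by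
    have h1 : HasFDerivAt (fun ψ => ∑ a, fderiv ℝ (fun ψ' => f ψ' a) ψ)
        (∑ a, fderiv ℝ (fderiv ℝ (fun ψ' => f ψ' a)) θ) θ :=
      HasFDerivAt.fun_sum (fun a _ =>
        (((hDFC a).differentiable (by norm_num)) θ).hasFDerivAt)
    have h3 : (fun ψ => ∑ a, fderiv ℝ (fun ψ' => f ψ' a) ψ)
        = (fun _ => (0 : EuclideanSpace ℝ (Fin D) →L[ℝ] ℝ)) := funext hz
    rw [h3] at h1
    exact h1.unique (hasFDerivAt_const _ _)
  have hKθ : fderiv ℝ G θ = 0 := by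
    have hterm : ∀ a : A, HasFDerivAt
        (fun ψ => (Real.log (f ψ a) - Real.log (f θ a) + 1) • (fderiv ℝ (fun ψ' => f ψ' a) ψ)
          - (L a (ψ - θ) / f θ a) • L a)
        (fderiv ℝ (fderiv ℝ (fun ψ' => f ψ' a)) θ) θ := by
      intro a
      have hc1 : HasFDerivAt (fun ψ => Real.log (f ψ a) - Real.log (f θ a) + 1)
          ((f θ a)⁻¹ • L a) θ := ((hlog a θ).sub_const _).add_const 1
      have hF1 : HasFDerivAt (fderiv ℝ (fun ψ' => f ψ' a))
          (fderiv ℝ (fderiv ℝ (fun ψ' => f ψ' a)) θ) θ :=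
        (((hDFC a).differentiable (by norm_num)) θ).hasFDerivAt
      have h1 := hc1.fun_smul hF1
      have hc2 : HasFDerivAt (fun ψ => L a (ψ - θ) / f θ a) ((f θ a)⁻¹ • L a) θ := by
        have h := (hlin a θ).const_mul ((f θ a)⁻¹)
        have heq : (fun ψ => L a (ψ - θ) / f θ a)
            = (fun ψ => (f θ a)⁻¹ * L a (ψ - θ)) := by
          funext ψ; ring
        rw [heq]
        exact h
      have h2 := hc2.fun_smul (hasFDerivAt_const (L a) θ)
      have h3 := h1.fun_sub h2
      refine h3.congr_fderiv ?_
      ext u w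
      simp only [ContinuousLinearMap.add_apply, ContinuousLinearMap.sub_apply,
        ContinuousLinearMap.smul_apply, ContinuousLinearMap.smulRight_apply,
        ContinuousLinearMap.zero_apply, ContinuousLinearMap.coe_smul', Pi.smul_apply,
        smul_eq_mul, sub_self, zero_add, one_smul, map_sub, map_zero]
      simp only [hLdef]
      ring
    have hG : HasFDerivAt G (∑ a, fderiv ℝ (fderiv ℝ (fun ψ' => f ψ' a)) θ) θ := by
      rw [hGdef]
      exact HasFDerivAt.fun_sum (fun a _ => hterm a)
    rw [hG.fderiv, hz2]
  obtain ⟨C, hCnn, hC⟩ := cube_bound hGg hGC2 hgθ hGθ hKθ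
  -- the quadratic form identity
  have hvrepr : ∀ v : EuclideanSpace ℝ (Fin D),
      ∑ i, v i • EuclideanSpace.single i (1:ℝ) = v := fun v => by
    simpa [EuclideanSpace.basisFun_apply, EuclideanSpace.basisFun_repr] using
      (EuclideanSpace.basisFun (Fin D) ℝ).sum_repr v
  have hLv : ∀ (a : A) (v : EuclideanSpace ℝ (Fin D)),
      L a v = ∑ i, v i * L a (EuclideanSpace.single i 1) := by
    intro a v
    conv_lhs => rw [← hvrepr v]
    rw [map_sum]
    simp [smul_eq_mul]
  have hJ' : ∀ i j, J i j = ∑ a,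
      (L a (EuclideanSpace.single i 1)) * (L a (EuclideanSpace.single j 1)) / f θ a := by
    intro i j
    rw [hJ i j]
    refine Finset.sum_congr rfl (fun a _ => ?_)
    have hlogL : fderiv ℝ (fun ψ => Real.log (f ψ a)) θ = (f θ a)⁻¹ • L a :=
      (hlog a θ).fderiv
    rw [hlogL]
    have hfθ : f θ a ≠ 0 := (hpos θ a).ne'
    simp only [ContinuousLinearMap.coe_smul', Pi.smul_apply, smul_eq_mul]
    field_simp
  have hQ : ∀ v : EuclideanSpace ℝ (Fin D),
      ∑ i, ∑ j, v i * J i j * v j = ∑ a, (L a v)^2 / f θ a := by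
    intro v
    have step1 : ∑ i, ∑ j, v i * J i j * v j
        = ∑ i, ∑ j, ∑ a, v i * ((L a (EuclideanSpace.single i 1)) * (L a (EuclideanSpace.single j 1)) / f θ a) * v j := by
      refine Finset.sum_congr rfl fun i _ => Finset.sum_congr rfl fun j _ => ?_
      rw [hJ' i j, Finset.mul_sum, Finset.sum_mul]
    rw [step1]
    have hswap : ∑ i, ∑ j, ∑ a : A, v i * ((L a (EuclideanSpace.single i 1)) * (L a (EuclideanSpace.single j 1)) / f θ a) * v j
        = ∑ a : A, ∑ i, ∑ j, v i * ((L a (EuclideanSpace.single i 1)) * (L a (EuclideanSpace.single j 1)) / f θ a) * v j := by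
      calc ∑ i, ∑ j, ∑ a : A, v i * ((L a (EuclideanSpace.single i 1)) * (L a (EuclideanSpace.single j 1)) / f θ a) * v j
          = ∑ i, ∑ a : A, ∑ j, v i * ((L a (EuclideanSpace.single i 1)) * (L a (EuclideanSpace.single j 1)) / f θ a) * v j :=
            Finset.sum_congr rfl fun i _ => Finset.sum_comm
        _ = ∑ a : A, ∑ i, ∑ j, v i * ((L a (EuclideanSpace.single i 1)) * (L a (EuclideanSpace.single j 1)) / f θ a) * v j :=
            Finset.sum_comm
    rw [hswap]
    refine Finset.sum_congr rfl fun a _ => ?_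
    rw [hLv a v, sq, Finset.sum_mul_sum, Finset.sum_div]
    refine Finset.sum_congr rfl fun i _ => ?_
    rw [Finset.sum_div]
    refine Finset.sum_congr rfl fun j _ => ?_
    ring
  -- KL identity
  have hKLid : ∀ v : EuclideanSpace ℝ (Fin D),
      KL (θ + v) θ = g (θ + v) + (∑ i, ∑ j, v i * J i j * v j)/2 := by
    intro v
    rw [hKL, hgdef, hQ v]
    simp only [add_sub_cancel_left]
    have hld : ∀ a : A, Real.log (f (θ + v) a / f θ a)
        = Real.log (f (θ + v) a) - Real.log (f θ a) :=
      fun a => Real.log_div (hpos _ a).ne' (hpos θ a).ne'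
    simp only [hld]
    rw [Finset.sum_sub_distrib]
    have h4 : ∑ a, (L a v)^2/(2 * f θ a) = (∑ a, (L a v)^2 / f θ a)/2 := by
      rw [Finset.sum_div]
      exact Finset.sum_congr rfl fun a _ => by ring
    rw [h4]
    ring
  -- final integral argument
  refine ⟨1, one_pos, C, hCnn, ?_⟩
  intro Ω _ μ _ δ hδm hδae
  have hmem : ∀ᵐ ω ∂μ, δ ω ∈ closedBall (0 : EuclideanSpace ℝ (Fin D)) 1 :=
    hδae.mono fun ω h => by simpa [mem_closedBall_zero_iff] using h
  have hgcont : Continuous g := continuous_iff_continuousAt.mpr fun ψ => (hGg ψ).continuousAt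
  have hint : ∀ (h : EuclideanSpace ℝ (Fin D) → ℝ), Continuous h →
      Integrable (fun ω => h (δ ω)) μ := by
    intro h hcont
    obtain ⟨B, hB⟩ := (isCompact_closedBall (0 : EuclideanSpace ℝ (Fin D)) 1).exists_bound_of_continuousOn
      hcont.continuousOn
    exact Integrable.mono' (integrable_const B) ((hcont.measurable.comp hδm).aestronglyMeasurable)
      (hmem.mono fun ω hω => hB _ hω)
  have hI1 : Integrable (fun ω => g (θ + δ ω)) μ :=
    hint (fun v => g (θ + v)) (hgcont.comp (continuous_const.add continuous_id))
  have hI2 : Integrable (fun ω => ∑ i, ∑ j, δ ω i * J i j * δ ω j) μ := by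
    apply hint (fun v => ∑ i, ∑ j, v i * J i j * v j)
    apply continuous_finset_sum
    intro i _
    apply continuous_finset_sum
    intro j _
    exact ((PiLp.continuous_apply (p := 2) (β := fun _ => ℝ) i).mul continuous_const).mul (PiLp.continuous_apply (p := 2) (β := fun _ => ℝ) j)
  have hI3 : Integrable (fun ω => ‖δ ω‖^3) μ :=
    hint (fun v => ‖v‖^3) (continuous_norm.pow 3)
  have hsplit : ∫ ω, KL (θ + δ ω) θ ∂μ
      = (∫ ω, g (θ + δ ω) ∂μ) + (∫ ω, ∑ i, ∑ j, δ ω i * J i j * δ ω j ∂μ)/2 := by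
    have hrw : (fun ω => KL (θ + δ ω) θ)
        = fun ω => g (θ + δ ω) + (∑ i, ∑ j, δ ω i * J i j * δ ω j)/2 :=
      funext fun ω => hKLid (δ ω)
    rw [hrw, integral_add hI1 (hI2.div_const 2), integral_div]
  rw [hsplit]
  have hsimp : (∫ ω, g (θ + δ ω) ∂μ) + (∫ ω, ∑ i, ∑ j, δ ω i * J i j * δ ω j ∂μ)/2
      - (1/2) * ∫ ω, ∑ i, ∑ j, δ ω i * J i j * δ ω j ∂μ = ∫ ω, g (θ + δ ω) ∂μ := by ring
  rw [hsimp]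
  have hptw : ∀ᵐ ω ∂μ, |g (θ + δ ω)| ≤ C * ‖δ ω‖^3 :=
    hδae.mono fun ω h => hC (δ ω) h
  calc |∫ ω, g (θ + δ ω) ∂μ| ≤ ∫ ω, |g (θ + δ ω)| ∂μ := by
        simpa [Real.norm_eq_abs] using
          norm_integral_le_integral_norm (fun ω => g (θ + δ ω)) (μ := μ)
    _ ≤ ∫ ω, C * ‖δ ω‖^3 ∂μ := integral_mono_ae hI1.abs (hI3.const_mul C) hptw
    _ = C * ∫ ω, ‖δ ω‖^3 ∂μ := integral_const_mul _ _
end
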